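/- Fix a real α > 1 and an integer m ≥ 1. Let the instance be a clique instance with T = min_j d_j, and let S_pr be a feasible preemptive schedule on m processors. For each job j let e_{ℓj} (resp. e_{rj}) be the total Lebesgue measure of the times at which j is executed before (resp. after) T in S_pr, and let L = { j : e_{ℓj} ≥ e_{rj} } and R = { j : e_{ℓj} < e_{rj} }. Then there exists a feasible preemptive schedule S on m processors in which every job of L is executed entirely within [r_j, T], every job of R is executed entirely within [T, d_j], and E(S) = 2^(α−1) · E(S_pr) (obtained by doubling every job's speed and executing each job only in a suitable subset of its original execution times). -/

import Mathlib

open MeasureTheory Set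

/-- A feasible preemptive (migratory) schedule on `m` identical speed-scalable
processors, for an instance given by jobs `ι` with works `w`, release dates `r` and
deadlines `d`: each job `j` gets a constant speed `speed j > 0` and, on each processor
`i`, a measurable set `A i j ⊆ [r j, d j]` of execution times; distinct jobs are
disjoint on each processor, a job never runs on two processors simultaneously, and the
total execution time times the speed equals the work. -/
structure PreemptiveSchedule (ι : Type) [Fintype ι] (m : ℕ) (w r d : ι → ℝ) where
  speed : ι → ℝ
  A : Fin m → ι → Set ℝ
  speed_pos : ∀ j, 0 < speed j
  measurableSet_A : ∀ i j, MeasurableSet (A i j)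
  A_subset : ∀ i j, A i j ⊆ Icc (r j) (d j)
  disjoint_jobs : ∀ i, ∀ j j', j ≠ j' → Disjoint (A i j) (A i j')
  disjoint_procs : ∀ j, ∀ i i', i ≠ i' → Disjoint (A i j) (A i' j)
  work_done : ∀ j, speed j * ∑ i, (volume (A i j)).toReal = w j

/-- The energy consumption of a preemptive schedule: each job `j` of work `w j` run at
constant speed `s_j` consumes energy `w j * s_j ^ (α - 1)`. -/
noncomputable def pEnergy {ι : Type} [Fintype ι] {m : ℕ} {w r d : ι → ℝ}
    (α : ℝ) (S : PreemptiveSchedule ι m w r d) : ℝ :=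
  ∑ j, w j * S.speed j ^ (α - 1)

lemma contLeft_aux (B : Set ℝ) (hfin : volume B ≠ ⊤) :
    Continuous fun t => (volume (B ∩ Iio t)).toReal := by
  have hf : ∀ t, volume (B ∩ Iio t) ≠ ⊤ := fun t =>
    ne_top_of_le_ne_top hfin (measure_mono inter_subset_left)
  have mono : Monotone fun t => (volume (B ∩ Iio t)).toReal := fun s t h =>
    ENNReal.toReal_mono (hf t)
      (measure_mono (inter_subset_inter_right _ (Iio_subset_Iio h)))
  have lip : ∀ s t : ℝ, s ≤ t →
      (volume (B ∩ Iio t)).toReal ≤ (volume (B ∩ Iio s)).toReal + (t - s) := by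
    intro s t h
    have hsub : B ∩ Iio t ⊆ (B ∩ Iio s) ∪ Ico s t := by
      rintro x ⟨hxB, hxt⟩
      by_cases hx : x < s
      · exact Or.inl ⟨hxB, hx⟩
      · exact Or.inr ⟨not_lt.1 hx, hxt⟩
    have h1 : volume (B ∩ Iio t) ≤ volume (B ∩ Iio s) + ENNReal.ofReal (t - s) := by
      calc volume (B ∩ Iio t) ≤ volume ((B ∩ Iio s) ∪ Ico s t) := measure_mono hsub
        _ ≤ volume (B ∩ Iio s) + volume (Ico s t) := measure_union_le _ _
        _ = volume (B ∩ Iio s) + ENNReal.ofReal (t - s) := by rw [Real.volume_Ico]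
    have h2 : (volume (B ∩ Iio t)).toReal
        ≤ (volume (B ∩ Iio s) + ENNReal.ofReal (t - s)).toReal :=
      ENNReal.toReal_mono (ENNReal.add_ne_top.2 ⟨hf s, ENNReal.ofReal_ne_top⟩) h1
    rwa [ENNReal.toReal_add (hf s) ENNReal.ofReal_ne_top,
      ENNReal.toReal_ofReal (by linarith)] at h2
  refine LipschitzWith.continuous (K := 1) (LipschitzWith.of_dist_le_mul fun x y => ?_)
  rw [Real.dist_eq, Real.dist_eq, NNReal.coe_one, one_mul]
  rcases le_total x y with h | h
  · have h1 := lip x y h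
    have h2 := mono h
    rw [abs_sub_comm, abs_of_nonneg (sub_nonneg.2 h2), abs_sub_comm,
      abs_of_nonneg (sub_nonneg.2 h)]
    linarith
  · have h1 := lip y x h
    have h2 := mono h
    rw [abs_of_nonneg (sub_nonneg.2 h2), abs_of_nonneg (sub_nonneg.2 h)]
    linarith

lemma contRight_aux (B : Set ℝ) (hfin : volume B ≠ ⊤) :
    Continuous fun t => (volume (B ∩ Ioi t)).toReal := by
  have hf : ∀ t, volume (B ∩ Ioi t) ≠ ⊤ := fun t =>
    ne_top_of_le_ne_top hfin (measure_mono inter_subset_left)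
  have mono : Antitone fun t => (volume (B ∩ Ioi t)).toReal := fun s t h =>
    ENNReal.toReal_mono (hf s)
      (measure_mono (inter_subset_inter_right _ (Ioi_subset_Ioi h)))
  have lip : ∀ s t : ℝ, s ≤ t →
      (volume (B ∩ Ioi s)).toReal ≤ (volume (B ∩ Ioi t)).toReal + (t - s) := by
    intro s t h
    have hsub : B ∩ Ioi s ⊆ (B ∩ Ioi t) ∪ Ioc s t := by
      rintro x ⟨hxB, hxs⟩
      by_cases hx : x ≤ t
      · exact Or.inr ⟨hxs, hx⟩
      · exact Or.inl ⟨hxB, not_le.1 hx⟩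
    have h1 : volume (B ∩ Ioi s) ≤ volume (B ∩ Ioi t) + ENNReal.ofReal (t - s) := by
      calc volume (B ∩ Ioi s) ≤ volume ((B ∩ Ioi t) ∪ Ioc s t) := measure_mono hsub
        _ ≤ volume (B ∩ Ioi t) + volume (Ioc s t) := measure_union_le _ _
        _ = volume (B ∩ Ioi t) + ENNReal.ofReal (t - s) := by rw [Real.volume_Ioc]
    have h2 : (volume (B ∩ Ioi s)).toReal
        ≤ (volume (B ∩ Ioi t) + ENNReal.ofReal (t - s)).toReal :=
      ENNReal.toReal_mono (ENNReal.add_ne_top.2 ⟨hf t, ENNReal.ofReal_ne_top⟩) h1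
    rwa [ENNReal.toReal_add (hf t) ENNReal.ofReal_ne_top,
      ENNReal.toReal_ofReal (by linarith)] at h2
  refine LipschitzWith.continuous (K := 1) (LipschitzWith.of_dist_le_mul fun x y => ?_)
  rw [Real.dist_eq, Real.dist_eq, NNReal.coe_one, one_mul]
  rcases le_total x y with h | h
  · have h1 := lip x y h
    have h2 := mono h
    rw [abs_of_nonneg (sub_nonneg.2 h2), abs_sub_comm,
      abs_of_nonneg (sub_nonneg.2 h)]
    linarith
  · have h1 := lip y x h
    have h2 := mono h
    rw [abs_sub_comm, abs_of_nonneg (sub_nonneg.2 h2),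
      abs_of_nonneg (sub_nonneg.2 h)]
    linarith

/-- Splitting a preemptive schedule of a clique instance at `T = min_j d_j`:
for each job `j` let `eL j` (resp. `eR j`) be the total measure of the times at which
`j` executes before (resp. after) `T` in `Spr`. Then there is a feasible preemptive
schedule `S` in which every job of `L = {j : eL j ≥ eR j}` is executed entirely within
`[r j, T]`, every job of `R = {j : eL j < eR j}` is executed entirely within
`[T, d j]`, and `E(S) = 2^(α-1) · E(Spr)` (obtained by doubling every job's speed). -/
theorem clique_split_at_T (ι : Type) [Fintype ι] [Nonempty ι] (α : ℝ) (hα : 1 < α)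
    (m : ℕ) (hm : 1 ≤ m) (w r d : ι → ℝ)
    (hw : ∀ j, 0 < w j) (hr : ∀ j, 0 ≤ r j) (hrd : ∀ j, r j < d j)
    (T : ℝ) (hT : T = ⨅ j, d j) (hclique : ∀ j, r j ≤ T)
    (Spr : PreemptiveSchedule ι m w r d)
    (eL eR : ι → ℝ)
    (heL : ∀ j, eL j = ∑ i, (volume (Spr.A i j ∩ Iio T)).toReal)
    (heR : ∀ j, eR j = ∑ i, (volume (Spr.A i j ∩ Ioi T)).toReal) :
    ∃ S : PreemptiveSchedule ι m w r d,
      (∀ j, eR j ≤ eL j → ∀ i, S.A i j ⊆ Icc (r j) T) ∧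
      (∀ j, eL j < eR j → ∀ i, S.A i j ⊆ Icc T (d j)) ∧
      pEnergy α S = 2 ^ (α - 1) * pEnergy α Spr := by
  classical
  -- basic finiteness
  have hfin : ∀ (i : Fin m) (j : ι), volume (Spr.A i j) ≠ ⊤ := by
    intro i j
    have h1 : volume (Spr.A i j) ≤ volume (Icc (r j) (d j)) :=
      measure_mono (Spr.A_subset i j)
    rw [Real.volume_Icc] at h1
    exact ne_top_of_le_ne_top ENNReal.ofReal_ne_top h1
  have hfinI : ∀ (i : Fin m) (j : ι) (s : Set ℝ), volume (Spr.A i j ∩ s) ≠ ⊤ :=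
    fun i j s => ne_top_of_le_ne_top (hfin i j) (measure_mono inter_subset_left)
  have hTd : ∀ j, T ≤ d j := by
    intro j
    rw [hT]
    exact ciInf_le (Set.Finite.bddBelow (Set.finite_range d)) j
  -- total time of job j
  set tot : ι → ℝ := fun j => ∑ i, (volume (Spr.A i j)).toReal with htot
  have htot_nonneg : ∀ j, 0 ≤ tot j := fun j =>
    Finset.sum_nonneg fun i _ => ENNReal.toReal_nonneg
  have hsplit : ∀ j, eL j + eR j = tot j := by
    intro j
    rw [heL, heR, ← Finset.sum_add_distrib]
    refine Finset.sum_congr rfl fun i _ => ?_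
    have hIci : volume (Spr.A i j ∩ Ici T) = volume (Spr.A i j ∩ Ioi T) := by
      refine le_antisymm ?_ (measure_mono (inter_subset_inter_right _ Ioi_subset_Ici_self))
      calc volume (Spr.A i j ∩ Ici T) ≤ volume ((Spr.A i j ∩ Ioi T) ∪ {T}) := by
            apply measure_mono
            rintro x ⟨hxA, hxT⟩
            rcases eq_or_lt_of_le (mem_Ici.1 hxT) with h | h
            · exact Or.inr (by simp [h.symm])
            · exact Or.inl ⟨hxA, h⟩
        _ ≤ volume (Spr.A i j ∩ Ioi T) + volume ({T} : Set ℝ) := measure_union_le _ _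
        _ = volume (Spr.A i j ∩ Ioi T) := by rw [Real.volume_singleton, add_zero]
    have key : volume (Spr.A i j ∩ Iio T) + volume (Spr.A i j ∩ Ioi T)
        = volume (Spr.A i j) := by
      rw [← hIci]
      have := measure_inter_add_diff (μ := volume) (Spr.A i j) (measurableSet_Iio (a := T))
      rw [diff_eq, compl_Iio] at this
      exact this
    rw [← ENNReal.toReal_add (hfinI i j _) (hfinI i j _), key]
  -- left and right cumulative functions
  set fL : ι → ℝ → ℝ := fun j t => ∑ i, (volume (Spr.A i j ∩ Iio t)).toReal with hfL
  set fR : ι → ℝ → ℝ := fun j t => ∑ i, (volume (Spr.A i j ∩ Ioi t)).toReal with hfR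
  have hcontL : ∀ j, Continuous (fL j) := fun j =>
    continuous_finset_sum _ fun i _ => contLeft_aux _ (hfin i j)
  have hcontR : ∀ j, Continuous (fR j) := fun j =>
    continuous_finset_sum _ fun i _ => contRight_aux _ (hfin i j)
  have hfL_r : ∀ j, fL j (r j) = 0 := by
    intro j
    refine Finset.sum_eq_zero fun i _ => ?_
    have : Spr.A i j ∩ Iio (r j) = ∅ := by
      rw [eq_empty_iff_forall_notMem]
      rintro x ⟨hxA, hxr⟩
      exact absurd (Spr.A_subset i j hxA).1 (not_le.2 hxr)
    rw [this]
    simp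
  have hfR_d : ∀ j, fR j (d j) = 0 := by
    intro j
    refine Finset.sum_eq_zero fun i _ => ?_
    have : Spr.A i j ∩ Ioi (d j) = ∅ := by
      rw [eq_empty_iff_forall_notMem]
      rintro x ⟨hxA, hxd⟩
      exact absurd (Spr.A_subset i j hxA).2 (not_le.2 hxd)
    rw [this]
    simp
  have hfL_T : ∀ j, fL j T = eL j := fun j => (heL j).symm
  have hfR_T : ∀ j, fR j T = eR j := fun j => (heR j).symm
  -- choose cut points
  have hexists : ∀ j, ∃ c : ℝ,
      (eR j ≤ eL j → c ∈ Icc (r j) T ∧ fL j c = tot j / 2) ∧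
      (¬ (eR j ≤ eL j) → c ∈ Icc T (d j) ∧ fR j c = tot j / 2) := by
    intro j
    by_cases h : eR j ≤ eL j
    · have hmem : tot j / 2 ∈ Icc (fL j (r j)) (fL j T) := by
        rw [hfL_r, hfL_T]
        constructor
        · linarith [htot_nonneg j]
        · have := hsplit j; linarith
      obtain ⟨c, hc1, hc2⟩ := intermediate_value_Icc (hclique j) ((hcontL j).continuousOn) hmem
      exact ⟨c, fun _ => ⟨hc1, hc2⟩, fun h' => absurd h h'⟩
    · have hlt : eL j < eR j := not_le.1 h
      have hmem : tot j / 2 ∈ Icc (fR j (d j)) (fR j T) := by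
        rw [hfR_d, hfR_T]
        constructor
        · linarith [htot_nonneg j]
        · have := hsplit j; linarith
      obtain ⟨c, hc1, hc2⟩ := intermediate_value_Icc' (hTd j) ((hcontR j).continuousOn) hmem
      exact ⟨c, fun h' => absurd h' h, fun _ => ⟨hc1, hc2⟩⟩
  choose c hcL hcR using hexists
  -- the new schedule
  refine ⟨⟨fun j => 2 * Spr.speed j,
    fun i j => if eR j ≤ eL j then Spr.A i j ∩ Iio (c j) else Spr.A i j ∩ Ioi (c j),
    fun j => by linarith [Spr.speed_pos j],
    fun i j => by
      by_cases h : eR j ≤ eL j <;> simp only [h, if_true, if_false] <;>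
        exact (Spr.measurableSet_A i j).inter (by measurability),
    fun i j => by
      by_cases h : eR j ≤ eL j <;> simp only [h, if_true, if_false] <;>
        exact inter_subset_left.trans (Spr.A_subset i j),
    fun i j j' hjj' => by
      have := Spr.disjoint_jobs i j j' hjj'
      by_cases h : eR j ≤ eL j <;> by_cases h' : eR j' ≤ eL j' <;>
        simp only [h, h', if_true, if_false] <;>
        exact this.mono inter_subset_left inter_subset_left,
    fun j i i' hii' => by
      have := Spr.disjoint_procs j i i' hii'
      by_cases h : eR j ≤ eL j <;> simp only [h, if_true, if_false] <;>
        exact this.mono inter_subset_left inter_subset_left,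
    fun j => by
      by_cases h : eR j ≤ eL j
      · simp only [h, if_true]
        have h2 : fL j (c j) = tot j / 2 := (hcL j h).2
        have h3 : Spr.speed j * tot j = w j := Spr.work_done j
        rw [hfL] at h2
        simp only at h2
        rw [h2]
        linarith
      · simp only [h, if_false]
        have h2 : fR j (c j) = tot j / 2 := (hcR j h).2
        have h3 : Spr.speed j * tot j = w j := Spr.work_done j
        rw [hfR] at h2
        simp only at h2
        rw [h2]
        linarith⟩, ?_, ?_, ?_⟩
  · intro j hj i
    simp only [hj, if_true]
    rintro x ⟨hxA, hxc⟩
    exact ⟨(Spr.A_subset i j hxA).1, le_trans (le_of_lt hxc) (hcL j hj).1.2⟩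
  · intro j hj i
    have h : ¬ (eR j ≤ eL j) := not_le.2 hj
    simp only [h, if_false]
    rintro x ⟨hxA, hxc⟩
    exact ⟨le_trans (hcR j h).1.1 (le_of_lt hxc), (Spr.A_subset i j hxA).2⟩
  · unfold pEnergy
    rw [Finset.mul_sum]
    refine Finset.sum_congr rfl fun j _ => ?_
    have hs : (0 : ℝ) ≤ Spr.speed j := (Spr.speed_pos j).le
    rw [Real.mul_rpow (by norm_num) hs]
    ring
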